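/- Let 𝓘 : Fin m → Finset ℕ be an abstract network, (T,ι) a contraction tree for 𝓘 of rank r and height H, Λ a feasibility assignment on the leaves of T, ε > 0 a real number, and Λ̂ an ε-simulation of Λ on (T,ι). Assume that every tensor in every set Λ̂(u) has all entries of modulus at most 1, that for every node u, every partial simulation λ̂ of Λ rooted at u, and every node u' of T[u], the tensor λ̂(u') has all entries of modulus at most 1, and that ε·(3·d^{2r}+1)^H ≤ 1. Let u₀ be the root of T (so ι(u₀) = ∅ and tensors at u₀ are single complex numbers), let α be the maximum of |g| over g ∈ Λ̂(u₀), and let VAL be the maximum of |λ̂(u₀)| over all partial simulations λ̂ of Λ rooted at u₀. Then |α − VAL| ≤ ε·(3·d^{2r}+1)^H. -/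

import Mathlib

/-- Rooted binary trees in which every internal node has exactly two children,
with leaves labeled by elements of `α`. -/
inductive BTree (α : Type) : Type
  | leaf (a : α) : BTree α
  | node (l r : BTree α) : BTree α

namespace BTree

variable {α : Type}

/-- The list of leaf labels of a binary tree. -/
def leaves : BTree α → List α
  | leaf a => [a]
  | node l r => l.leaves ++ r.leaves

/-- The height of a binary tree: maximum number of edges on a root-to-leaf path. -/
def height : BTree α → ℕ
  | leaf _ => 0
  | node l r => max l.height r.height + 1

/-- The list of all subtrees (i.e. nodes) of a binary tree. -/
def subtrees : BTree α → List (BTree α)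
  | leaf a => [leaf a]
  | node l r => node l r :: (l.subtrees ++ r.subtrees)

end BTree

/-- An abstract network: every index occurring in the family belongs to exactly
two members of the family. -/
def IsAbstractNetwork {m : ℕ} (I : Fin m → Finset ℕ) : Prop :=
  ∀ i : ℕ, (∃ j : Fin m, i ∈ I j) →
    (Finset.univ.filter fun j : Fin m => i ∈ I j).card = 2

/-- The index set `ι(u)` attached to the node `u` of a contraction tree for `I`. -/
def iota {m : ℕ} (I : Fin m → Finset ℕ) : BTree (Fin m) → Finset ℕ
  | .leaf j => I j
  | .node l r => symmDiff (iota I l) (iota I r)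

/-- `(T, ι)` is a contraction tree for the abstract network `I`: the leaves of `T` are
labeled bijectively with the members of the family, and at every internal node the
index sets of the two children intersect. -/
def IsContractionTree {m : ℕ} (I : Fin m → Finset ℕ) (T : BTree (Fin m)) : Prop :=
  T.leaves.Nodup ∧ (∀ j : Fin m, j ∈ T.leaves) ∧
  ∀ l r : BTree (Fin m), BTree.node l r ∈ T.subtrees →
    ((iota I l) ∩ (iota I r)).Nonempty

/-- The rank of the contraction tree `(T, ι)`: the maximum of `|ι(u)|` over nodes `u`. -/
def rankOf {m : ℕ} (I : Fin m → Finset ℕ) (T : BTree (Fin m)) : ℕ :=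
  (T.subtrees.map fun u => (iota I u).card).foldr max 0

/-- A `d`-state tensor, given by its entries on assignments of a pair of values in
`Fin d` to every possible index; a tensor *with index set* `I` is one whose entries
depend only on the values assigned to the indices in `I` (see `HasIndexSet`). -/
abbrev Tensor (d : ℕ) : Type := (ℕ → Fin d × Fin d) → ℂ

/-- `g` is a tensor with index set `I`: its entries depend only on the indices in `I`. -/
def HasIndexSet {d : ℕ} (g : Tensor d) (I : Finset ℕ) : Prop :=
  ∀ σ τ : ℕ → Fin d × Fin d, (∀ x ∈ I, σ x = τ x) → g σ = g τ

/-- The norm of a tensor: the supremum of the moduli of its entries. -/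
noncomputable def tnorm {d : ℕ} (g : Tensor d) : ℝ := ⨆ σ, ‖g σ‖

/-- The contraction of two tensors over the shared index set `L`. -/
noncomputable def contr {d : ℕ} (L : Finset ℕ) (g g' : Tensor d) : Tensor d :=
  fun σ => ∑ τ : ↥L → Fin d × Fin d,
    g (fun x => if h : x ∈ L then τ ⟨x, h⟩ else σ x) *
    g' (fun x => if h : x ∈ L then τ ⟨x, h⟩ else σ x)

/-- A partial simulation of the feasibility assignment `Λ` rooted at the node `u`:
an assignment of a tensor to each node of the subtree `T[u]` that picks a member of
`Λ` at each leaf and is the contraction of the children's tensors (over their shared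
index set) at each internal node. -/
def IsPartialSim {d m : ℕ} (I : Fin m → Finset ℕ) (Λ : Fin m → Finset (Tensor d))
    (u : BTree (Fin m)) (lam : BTree (Fin m) → Tensor d) : Prop :=
  (∀ j : Fin m, BTree.leaf j ∈ u.subtrees → lam (BTree.leaf j) ∈ Λ j) ∧
  (∀ l r : BTree (Fin m), BTree.node l r ∈ u.subtrees →
    lam (BTree.node l r) = contr ((iota I l) ∩ (iota I r)) (lam l) (lam r))

/-- An `ε`-simulation of the feasibility assignment `Λ` on the contraction tree `T`:
each node carries a finite set of tensors, agreeing with `Λ` at the leaves; at every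
internal node, every tensor of the node is `ε`-close to the contraction of some pair
of tensors of the children, and conversely the contraction of every pair of tensors
of the children is `ε`-close to some tensor of the node. -/
def IsEpsSim {d m : ℕ} (I : Fin m → Finset ℕ) (Λ : Fin m → Finset (Tensor d))
    (T : BTree (Fin m)) (ε : ℝ) (L : BTree (Fin m) → Finset (Tensor d)) : Prop :=
  (∀ j : Fin m, BTree.leaf j ∈ T.subtrees → L (BTree.leaf j) = Λ j) ∧
  (∀ l r : BTree (Fin m), BTree.node l r ∈ T.subtrees →
    (∀ g ∈ L (BTree.node l r), ∃ gl ∈ L l, ∃ gr ∈ L r,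
        tnorm (g - contr ((iota I l) ∩ (iota I r)) gl gr) ≤ ε) ∧
    (∀ gl ∈ L l, ∀ gr ∈ L r, ∃ g ∈ L (BTree.node l r),
        tnorm (g - contr ((iota I l) ∩ (iota I r)) gl gr) ≤ ε))

section Aux
open BTree
variable {α : Type}

lemma mem_subtrees_self (t : BTree α) : t ∈ t.subtrees := by
  cases t <;> simp [BTree.subtrees]

lemma subtrees_subset {t u : BTree α} (h : u ∈ t.subtrees) : u.subtrees ⊆ t.subtrees := by
  induction t with
  | leaf a => simp [BTree.subtrees] at h; subst h; exact fun x hx => hx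
  | node l r ihl ihr =>
    simp [BTree.subtrees] at h
    rcases h with h | h | h
    · subst h; exact fun x hx => hx
    · intro x hx; simp [BTree.subtrees]; right; left; exact ihl h hx
    · intro x hx; simp [BTree.subtrees]; right; right; exact ihr h hx

lemma left_mem_subtrees {l r : BTree α} : l ∈ (BTree.node l r).subtrees := by
  simp [BTree.subtrees]; right; left; exact mem_subtrees_self l

lemma right_mem_subtrees {l r : BTree α} : r ∈ (BTree.node l r).subtrees := by
  simp [BTree.subtrees]; right; right; exact mem_subtrees_self r

lemma leaves_sublist {t u : BTree α} (h : u ∈ t.subtrees) : u.leaves.Sublist t.leaves := by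
  induction t with
  | leaf a => simp [BTree.subtrees] at h; subst h; exact List.Sublist.refl _
  | node l r ihl ihr =>
    simp [BTree.subtrees] at h
    rcases h with h | h | h
    · subst h; exact List.Sublist.refl _
    · exact (ihl h).trans (List.sublist_append_left _ _)
    · exact (ihr h).trans (List.sublist_append_right _ _)

lemma leaves_ne_nil (t : BTree α) : t.leaves ≠ [] := by
  induction t with
  | leaf a => simp [BTree.leaves]
  | node l r ihl ihr => simp [BTree.leaves]; intro h; exact absurd h ihl

lemma height_le {t u : BTree α} (h : u ∈ t.subtrees) : u.height ≤ t.height := by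
  induction t with
  | leaf a => simp [BTree.subtrees] at h; subst h; rfl
  | node l r ihl ihr =>
    simp [BTree.subtrees] at h
    rcases h with h | h | h
    · subst h; rfl
    · exact (ihl h).trans (by simp [BTree.height]; omega)
    · exact (ihr h).trans (by simp [BTree.height]; omega)

def bsize : BTree α → ℕ
  | .leaf _ => 1
  | .node l r => bsize l + bsize r + 1

lemma bsize_le {t u : BTree α} (h : u ∈ t.subtrees) : bsize u ≤ bsize t := by
  induction t with
  | leaf a => simp [BTree.subtrees] at h; subst h; rfl
  | node l r ihl ihr =>
    simp [BTree.subtrees] at h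
    rcases h with h | h | h
    · subst h; rfl
    · exact (ihl h).trans (by simp [bsize]; omega)
    · exact (ihr h).trans (by simp [bsize]; omega)

lemma node_not_mem_left {l r : BTree α} : BTree.node l r ∉ l.subtrees := by
  intro h; have := bsize_le h; simp [bsize] at this

lemma node_not_mem_right {l r : BTree α} : BTree.node l r ∉ r.subtrees := by
  intro h; have := bsize_le h; simp [bsize] at this

lemma subtrees_disjoint {l r : BTree α} (hnd : (BTree.node l r).leaves.Nodup)
    {v : BTree α} (h1 : v ∈ l.subtrees) (h2 : v ∈ r.subtrees) : False := by
  obtain ⟨j, hj⟩ := List.exists_mem_of_ne_nil _ (leaves_ne_nil v)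
  have hjl := (leaves_sublist h1).subset hj
  have hjr := (leaves_sublist h2).subset hj
  have : (l.leaves ++ r.leaves).Nodup := hnd
  exact (List.disjoint_of_nodup_append this) hjl hjr

lemma le_foldr_max {a : ℕ} {L : List ℕ} (h : a ∈ L) : a ≤ L.foldr max 0 := by
  induction L with
  | nil => simp at h
  | cons b L ih =>
    simp at h
    rcases h with h | h
    · subst h; simp [List.foldr]
    · simp [List.foldr]; right; exact ih h

end Aux

section TensorAux
variable {d : ℕ}

lemma abs_contr_le (L' : Finset ℕ) (g g' : Tensor d)
    (hg : ∀ σ, ‖g σ‖ ≤ 1) (hg' : ∀ σ, ‖g' σ‖ ≤ 1)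
    (σ : ℕ → Fin d × Fin d) :
    ‖contr L' g g' σ‖ ≤ (Fintype.card (↥L' → Fin d × Fin d) : ℝ) := by
  unfold contr
  calc ‖∑ τ : ↥L' → Fin d × Fin d, _‖
      ≤ ∑ τ : ↥L' → Fin d × Fin d, ‖g (fun x => if h : x ∈ L' then τ ⟨x, h⟩ else σ x) *
           g' (fun x => if h : x ∈ L' then τ ⟨x, h⟩ else σ x)‖ := norm_sum_le _ _
    _ ≤ ∑ _τ : ↥L' → Fin d × Fin d, (1 : ℝ) := by
        refine Finset.sum_le_sum (fun τ _ => ?_)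
        rw [norm_mul]
        exact mul_le_one₀ (hg _) (norm_nonneg _) (hg' _)
    _ = (Fintype.card (↥L' → Fin d × Fin d) : ℝ) := by simp [Finset.card_univ]

lemma contr_diff_bound (L' : Finset ℕ) (gl gr hl hr : Tensor d) (El Er : ℝ)
    (hEl0 : 0 ≤ El) (hEr0 : 0 ≤ Er)
    (hgl : ∀ σ, ‖gl σ‖ ≤ 1) (hhr : ∀ σ, ‖hr σ‖ ≤ 1)
    (hEl : ∀ σ, ‖gl σ - hl σ‖ ≤ El)
    (hEr : ∀ σ, ‖gr σ - hr σ‖ ≤ Er) (σ : ℕ → Fin d × Fin d) :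
    ‖contr L' gl gr σ - contr L' hl hr σ‖
      ≤ (Fintype.card (↥L' → Fin d × Fin d) : ℝ) * (El + Er) := by
  unfold contr
  rw [← Finset.sum_sub_distrib]
  have key : ∀ τ : ↥L' → Fin d × Fin d, ‖gl (fun x => if h : x ∈ L' then τ ⟨x, h⟩ else σ x) *
       gr (fun x => if h : x ∈ L' then τ ⟨x, h⟩ else σ x) -
       hl (fun x => if h : x ∈ L' then τ ⟨x, h⟩ else σ x) *
       hr (fun x => if h : x ∈ L' then τ ⟨x, h⟩ else σ x)‖ ≤ El + Er := by
    intro τ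
    set x : ℕ → Fin d × Fin d := fun y => if h : y ∈ L' then τ ⟨y, h⟩ else σ y with hx
    have heq : gl x * gr x - hl x * hr x = gl x * (gr x - hr x) + (gl x - hl x) * hr x := by
      ring
    rw [heq]
    refine le_trans (norm_add_le _ _) ?_
    rw [norm_mul, norm_mul]
    have h1 : ‖gl x‖ * ‖gr x - hr x‖ ≤ 1 * Er :=
      mul_le_mul (hgl x) (hEr x) (norm_nonneg _) zero_le_one
    have h2 : ‖gl x - hl x‖ * ‖hr x‖ ≤ El * 1 :=
      mul_le_mul (hEl x) (hhr x) (norm_nonneg _) hEl0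
    linarith
  calc ‖∑ τ : ↥L' → Fin d × Fin d, _‖
      ≤ ∑ τ : ↥L' → Fin d × Fin d, ‖gl (fun x => if h : x ∈ L' then τ ⟨x, h⟩ else σ x) *
           gr (fun x => if h : x ∈ L' then τ ⟨x, h⟩ else σ x) -
           hl (fun x => if h : x ∈ L' then τ ⟨x, h⟩ else σ x) *
           hr (fun x => if h : x ∈ L' then τ ⟨x, h⟩ else σ x)‖ := norm_sum_le _ _
    _ ≤ ∑ _τ : ↥L' → Fin d × Fin d, (El + Er) := Finset.sum_le_sum (fun τ _ => key τ)
    _ = (Fintype.card (↥L' → Fin d × Fin d) : ℝ) * (El + Er) := by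
        simp [Finset.sum_const, Finset.card_univ, nsmul_eq_mul]; ring

lemma card_fun_le (hd : 1 ≤ d) {L' : Finset ℕ} {r : ℕ} (hL : L'.card ≤ r) :
    (Fintype.card (↥L' → Fin d × Fin d) : ℝ) ≤ (d : ℝ) ^ (2 * r) := by
  classical
  rw [Fintype.card_fun, Fintype.card_prod, Fintype.card_fin, Fintype.card_coe]
  have hdd : (1 : ℝ) ≤ (d : ℝ) * d := by
    have : (1 : ℝ) ≤ (d : ℝ) := by exact_mod_cast hd
    nlinarith
  calc ((((d * d) ^ L'.card : ℕ)) : ℝ) = ((d : ℝ) * d) ^ L'.card := by push_cast; ring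
    _ ≤ ((d : ℝ) * d) ^ r := pow_le_pow_right₀ hdd hL
    _ = (d : ℝ) ^ (2 * r) := by rw [two_mul, pow_add]; ring

lemma pointwise_le_tnorm (g : Tensor d) (B : ℝ)
    (hB : ∀ σ, ‖g σ‖ ≤ B) (σ : ℕ → Fin d × Fin d) :
    ‖g σ‖ ≤ tnorm g :=
  le_ciSup (f := fun σ => ‖g σ‖) ⟨B, by rintro x ⟨τ, rfl⟩; exact hB τ⟩ σ

lemma tnorm_le_tnorm_add (hd : 1 ≤ d) (g h : Tensor d) (B E : ℝ)
    (hB : ∀ σ, ‖h σ‖ ≤ B)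
    (hE : ∀ σ, ‖g σ - h σ‖ ≤ E) :
    tnorm g ≤ tnorm h + E := by
  haveI : Nonempty (ℕ → Fin d × Fin d) := ⟨fun _ => (⟨0, hd⟩, ⟨0, hd⟩)⟩
  refine ciSup_le (fun σ => ?_)
  have htri : ‖g σ‖ ≤ ‖h σ‖ + ‖g σ - h σ‖ := by
    have := norm_add_le (h σ) (g σ - h σ)
    simpa using this
  exact htri.trans (add_le_add (pointwise_le_tnorm h B hB σ) (hE σ))

end TensorAux
lemma key_induction {d m : ℕ} (hd : 1 ≤ d) (I : Fin m → Finset ℕ) (T : BTree (Fin m))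
    (hTn : T.leaves.Nodup) (r : ℕ) (hrank : rankOf I T = r)
    (Λ : Fin m → Finset (Tensor d)) (ε : ℝ) (hε : 0 < ε)
    (L : BTree (Fin m) → Finset (Tensor d)) (hsim : IsEpsSim I Λ T ε L)
    (hb1 : ∀ u ∈ T.subtrees, ∀ g ∈ L u, ∀ σ, ‖g σ‖ ≤ 1)
    (hb2 : ∀ u ∈ T.subtrees, ∀ lam : BTree (Fin m) → Tensor d,
      IsPartialSim I Λ u lam → ∀ u2 ∈ u.subtrees, ∀ σ, ‖lam u2 σ‖ ≤ 1) :
    ∀ u, u ∈ T.subtrees →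
      (∀ g ∈ L u, ∃ lam, IsPartialSim I Λ u lam ∧
        ∀ σ, ‖g σ - lam u σ‖ ≤ ε * (3 * (d : ℝ) ^ (2 * r) + 1) ^ u.height) ∧
      (∀ lam, IsPartialSim I Λ u lam → ∃ g ∈ L u,
        ∀ σ, ‖g σ - lam u σ‖ ≤ ε * (3 * (d : ℝ) ^ (2 * r) + 1) ^ u.height) := by
  classical
  have hd1 : (1 : ℝ) ≤ (d : ℝ) := by exact_mod_cast hd
  have hD1 : (1 : ℝ) ≤ (d : ℝ) ^ (2 * r) := by
    calc (1 : ℝ) = 1 ^ (2 * r) := (one_pow _).symm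
      _ ≤ (d : ℝ) ^ (2 * r) := pow_le_pow_left₀ zero_le_one hd1 _
  have hC1 : (1 : ℝ) ≤ 3 * (d : ℝ) ^ (2 * r) + 1 := by linarith
  intro u
  induction u with
  | leaf j =>
    intro hu
    have hLj : L (BTree.leaf j) = Λ j := hsim.1 j hu
    constructor
    · intro g hg
      refine ⟨fun _ => g, ⟨?_, ?_⟩, ?_⟩
      · intro j' hj'
        simp [BTree.subtrees] at hj'
        subst hj'
        rwa [hLj] at hg
      · intro a b hab
        simp [BTree.subtrees] at hab
      · intro σ
        simp only [sub_self, norm_zero]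
        positivity
    · intro lam hlam
      refine ⟨lam (BTree.leaf j), ?_, ?_⟩
      · rw [hLj]; exact hlam.1 j (mem_subtrees_self _)
      · intro σ
        simp only [sub_self, norm_zero]
        positivity
  | node a b iha ihb =>
    intro hu
    have haT : a ∈ T.subtrees := subtrees_subset hu left_mem_subtrees
    have hbT : b ∈ T.subtrees := subtrees_subset hu right_mem_subtrees
    have hnd : (BTree.node a b).leaves.Nodup := hTn.sublist (leaves_sublist hu)
    have hdisj : ∀ v, v ∈ a.subtrees → v ∈ b.subtrees → False :=
      fun v h1 h2 => subtrees_disjoint hnd h1 h2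
    set L' : Finset ℕ := (iota I a) ∩ (iota I b) with hL'
    have hcard : L'.card ≤ r := by
      refine le_trans (Finset.card_le_card Finset.inter_subset_left) ?_
      rw [← hrank]
      exact le_foldr_max (List.mem_map_of_mem haT)
    have hN : (Fintype.card (↥L' → Fin d × Fin d) : ℝ) ≤ (d : ℝ) ^ (2 * r) := card_fun_le hd hcard
    set C : ℝ := 3 * (d : ℝ) ^ (2 * r) + 1 with hC
    set h : ℕ := max a.height b.height with hh
    have hCh : (1 : ℝ) ≤ C ^ h := by
      calc (1 : ℝ) = 1 ^ h := (one_pow _).symm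
        _ ≤ C ^ h := pow_le_pow_left₀ zero_le_one hC1 _
    have hCa : C ^ a.height ≤ C ^ h := pow_le_pow_right₀ hC1 (le_max_left _ _)
    have hCb : C ^ b.height ≤ C ^ h := pow_le_pow_right₀ hC1 (le_max_right _ _)
    have hheight : (BTree.node a b).height = h + 1 := rfl
    -- the combined arithmetic estimate
    have harith : ε + (d : ℝ) ^ (2 * r) * (ε * C ^ a.height + ε * C ^ b.height)
        ≤ ε * C ^ (h + 1) := by
      have h1 : ε * C ^ a.height ≤ ε * C ^ h := by nlinarith
      have h2 : ε * C ^ b.height ≤ ε * C ^ h := by nlinarith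
      have h3 : ε ≤ ε * C ^ h := by nlinarith
      have h4 : (d : ℝ) ^ (2 * r) * (ε * C ^ a.height + ε * C ^ b.height)
          ≤ (d : ℝ) ^ (2 * r) * (2 * (ε * C ^ h)) := by nlinarith
      have h5 : ε * C ^ (h + 1) = ε * C ^ h + 3 * (d : ℝ) ^ (2 * r) * (ε * C ^ h) := by
        rw [pow_succ, hC]; ring
      nlinarith
    constructor
    · -- (A)
      intro g hg
      obtain ⟨gl, hgl, gr, hgr, hng⟩ := (hsim.2 a b hu).1 g hg
      obtain ⟨laml, hlaml, herrl⟩ := (iha haT).1 gl hgl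
      obtain ⟨lamr, hlamr, herrr⟩ := (ihb hbT).1 gr hgr
      set lam : BTree (Fin m) → Tensor d := fun v =>
        if v ∈ a.subtrees then laml v
        else if v ∈ b.subtrees then lamr v
        else contr L' (laml a) (lamr b) with hlamdef
      have lama : lam a = laml a := by
        simp only [hlamdef]; rw [if_pos (mem_subtrees_self a)]
      have lamb : lam b = lamr b := by
        simp only [hlamdef]
        rw [if_neg (fun hmem => hdisj b hmem (mem_subtrees_self b)),
          if_pos (mem_subtrees_self b)]
      have lamnode : lam (BTree.node a b) = contr L' (laml a) (lamr b) := by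
        simp only [hlamdef]
        rw [if_neg node_not_mem_left, if_neg node_not_mem_right]
      have hps : IsPartialSim I Λ (BTree.node a b) lam := by
        constructor
        · intro j hj
          simp only [BTree.subtrees, List.mem_cons, List.mem_append] at hj
          rcases hj with hj | hj | hj
          · exact absurd hj (by simp)
          · simp only [hlamdef]; rw [if_pos hj]; exact hlaml.1 j hj
          · simp only [hlamdef]
            rw [if_neg (fun hmem => hdisj _ hmem hj), if_pos hj]
            exact hlamr.1 j hj
        · intro x y hxy
          simp only [BTree.subtrees, List.mem_cons, List.mem_append] at hxy
          rcases hxy with hxy | hxy | hxy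
          · have hx : x = a := by injection hxy
            have hy : y = b := by injection hxy
            subst hx; subst hy
            rw [lamnode, lama, lamb]
          · have hx : x ∈ a.subtrees := subtrees_subset hxy left_mem_subtrees
            have hy : y ∈ a.subtrees := subtrees_subset hxy right_mem_subtrees
            simp only [hlamdef]
            rw [if_pos hxy, if_pos hx, if_pos hy]
            exact hlaml.2 x y hxy
          · have hx : x ∈ b.subtrees := subtrees_subset hxy left_mem_subtrees
            have hy : y ∈ b.subtrees := subtrees_subset hxy right_mem_subtrees
            simp only [hlamdef]
            rw [if_neg (fun hmem => hdisj _ hmem hxy),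
              if_neg (fun hmem => hdisj _ hmem hx),
              if_neg (fun hmem => hdisj _ hmem hy), if_pos hxy, if_pos hx, if_pos hy]
            exact hlamr.2 x y hxy
      refine ⟨lam, hps, ?_⟩
      intro σ
      -- pointwise bound |g σ - contr gl gr σ| ≤ ε
      have hb1g := hb1 _ hu g hg
      have hb1gl := hb1 _ haT gl hgl
      have hb1gr := hb1 _ hbT gr hgr
      have hbdd : ∀ τ, ‖(g - contr L' gl gr) τ‖
          ≤ 1 + (Fintype.card (↥L' → Fin d × Fin d) : ℝ) := by
        intro τ
        rw [Pi.sub_apply, sub_eq_add_neg]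
        refine le_trans (norm_add_le _ _) ?_
        rw [norm_neg]
        exact add_le_add (hb1g τ) (abs_contr_le L' gl gr hb1gl hb1gr τ)
      have h1 : ‖g σ - contr L' gl gr σ‖ ≤ ε := by
        have := pointwise_le_tnorm (g - contr L' gl gr) _ hbdd σ
        rw [Pi.sub_apply] at this
        exact this.trans hng
      have hlamlb : ∀ τ, ‖laml a τ‖ ≤ 1 :=
        fun τ => hb2 a haT laml hlaml a (mem_subtrees_self a) τ
      have hlamrb : ∀ τ, ‖lamr b τ‖ ≤ 1 :=
        fun τ => hb2 b hbT lamr hlamr b (mem_subtrees_self b) τ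
      have h2 := contr_diff_bound L' gl gr (laml a) (lamr b)
        (ε * C ^ a.height) (ε * C ^ b.height) (by positivity) (by positivity)
        hb1gl hlamrb herrl herrr σ
      have htri : ‖g σ - lam (BTree.node a b) σ‖
          ≤ ‖g σ - contr L' gl gr σ‖
            + ‖contr L' gl gr σ - contr L' (laml a) (lamr b) σ‖ := by
        rw [lamnode]
        have : g σ - contr L' (laml a) (lamr b) σ
            = (g σ - contr L' gl gr σ) + (contr L' gl gr σ - contr L' (laml a) (lamr b) σ) := by
          ring
        rw [this]
        exact norm_add_le _ _
      rw [hheight]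
      have h3 : (Fintype.card (↥L' → Fin d × Fin d) : ℝ)
            * (ε * C ^ a.height + ε * C ^ b.height)
          ≤ (d : ℝ) ^ (2 * r) * (ε * C ^ a.height + ε * C ^ b.height) := by
        have hpos : (0:ℝ) ≤ ε * C ^ a.height + ε * C ^ b.height := by positivity
        exact mul_le_mul_of_nonneg_right hN hpos
      calc ‖g σ - lam (BTree.node a b) σ‖
          ≤ ε + (Fintype.card (↥L' → Fin d × Fin d) : ℝ)
              * (ε * C ^ a.height + ε * C ^ b.height) := htri.trans (add_le_add h1 h2)
        _ ≤ ε + (d : ℝ) ^ (2 * r) * (ε * C ^ a.height + ε * C ^ b.height) := by linarith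
        _ ≤ ε * C ^ (h + 1) := harith
    · -- (B)
      intro lam hlam
      have hlaml : IsPartialSim I Λ a lam := by
        constructor
        · intro j hj
          exact hlam.1 j (subtrees_subset left_mem_subtrees hj)
        · intro x y hxy
          exact hlam.2 x y (subtrees_subset left_mem_subtrees hxy)
      have hlamr : IsPartialSim I Λ b lam := by
        constructor
        · intro j hj
          exact hlam.1 j (subtrees_subset right_mem_subtrees hj)
        · intro x y hxy
          exact hlam.2 x y (subtrees_subset right_mem_subtrees hxy)
      obtain ⟨gl, hgl, herrl⟩ := (iha haT).2 lam hlaml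
      obtain ⟨gr, hgr, herrr⟩ := (ihb hbT).2 lam hlamr
      obtain ⟨g, hg, hng⟩ := (hsim.2 a b hu).2 gl hgl gr hgr
      refine ⟨g, hg, ?_⟩
      intro σ
      have lamnode : lam (BTree.node a b) = contr L' (lam a) (lam b) :=
        hlam.2 a b (mem_subtrees_self _)
      have hb1g := hb1 _ hu g hg
      have hb1gl := hb1 _ haT gl hgl
      have hb1gr := hb1 _ hbT gr hgr
      have hbdd : ∀ τ, ‖(g - contr L' gl gr) τ‖
          ≤ 1 + (Fintype.card (↥L' → Fin d × Fin d) : ℝ) := by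
        intro τ
        rw [Pi.sub_apply, sub_eq_add_neg]
        refine le_trans (norm_add_le _ _) ?_
        rw [norm_neg]
        exact add_le_add (hb1g τ) (abs_contr_le L' gl gr hb1gl hb1gr τ)
      have h1 : ‖g σ - contr L' gl gr σ‖ ≤ ε := by
        have := pointwise_le_tnorm (g - contr L' gl gr) _ hbdd σ
        rw [Pi.sub_apply] at this
        exact this.trans hng
      have hlamrb : ∀ τ, ‖lam b τ‖ ≤ 1 :=
        fun τ => hb2 b hbT lam hlamr b (mem_subtrees_self b) τ
      have h2 := contr_diff_bound L' gl gr (lam a) (lam b)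
        (ε * C ^ a.height) (ε * C ^ b.height) (by positivity) (by positivity)
        hb1gl hlamrb herrl herrr σ
      have htri : ‖g σ - lam (BTree.node a b) σ‖
          ≤ ‖g σ - contr L' gl gr σ‖
            + ‖contr L' gl gr σ - contr L' (lam a) (lam b) σ‖ := by
        rw [lamnode]
        have : g σ - contr L' (lam a) (lam b) σ
            = (g σ - contr L' gl gr σ) + (contr L' gl gr σ - contr L' (lam a) (lam b) σ) := by
          ring
        rw [this]
        exact norm_add_le _ _
      rw [hheight]
      have h3 : (Fintype.card (↥L' → Fin d × Fin d) : ℝ)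
            * (ε * C ^ a.height + ε * C ^ b.height)
          ≤ (d : ℝ) ^ (2 * r) * (ε * C ^ a.height + ε * C ^ b.height) := by
        have hpos : (0:ℝ) ≤ ε * C ^ a.height + ε * C ^ b.height := by positivity
        exact mul_le_mul_of_nonneg_right hN hpos
      calc ‖g σ - lam (BTree.node a b) σ‖
          ≤ ε + (Fintype.card (↥L' → Fin d × Fin d) : ℝ)
              * (ε * C ^ a.height + ε * C ^ b.height) := htri.trans (add_le_add h1 h2)
        _ ≤ ε + (d : ℝ) ^ (2 * r) * (ε * C ^ a.height + ε * C ^ b.height) := by linarith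
        _ ≤ ε * C ^ (h + 1) := harith
/-- Under the stated boundedness assumptions, if `α` is the largest
modulus of a (rank-0) tensor in the `ε`-simulation at the root of the contraction tree,
and `VAL` is the largest modulus of the root tensor over all partial simulations of
`Λ` rooted at the root, then `|α − VAL| ≤ ε·(3d^(2r)+1)^H`. -/
theorem statement_13
    (d m : ℕ) (hd : 1 ≤ d)
    (I : Fin m → Finset ℕ) (hnet : IsAbstractNetwork I)
    (T : BTree (Fin m)) (hT : IsContractionTree I T)
    (r H : ℕ) (hrank : rankOf I T = r) (hheight : T.height = H)
    (Λ : Fin m → Finset (Tensor d))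
    (hΛ : ∀ j : Fin m, (Λ j).Nonempty ∧ ∀ g ∈ Λ j, HasIndexSet g (I j))
    (ε : ℝ) (hε : 0 < ε)
    (L : BTree (Fin m) → Finset (Tensor d)) (hsim : IsEpsSim I Λ T ε L)
    (hidx : ∀ u ∈ T.subtrees, ∀ g ∈ L u, HasIndexSet g (iota I u))
    (hb1 : ∀ u ∈ T.subtrees, ∀ g ∈ L u, ∀ σ, ‖g σ‖ ≤ 1)
    (hb2 : ∀ u ∈ T.subtrees, ∀ lam : BTree (Fin m) → Tensor d,
      IsPartialSim I Λ u lam → ∀ u2 ∈ u.subtrees, ∀ σ, ‖lam u2 σ‖ ≤ 1)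
    (hsmall : ε * (3 * (d : ℝ) ^ (2 * r) + 1) ^ H ≤ 1)
    (hroot : iota I T = ∅)
    (α VAL : ℝ)
    (hα : IsGreatest {x : ℝ | ∃ g ∈ L T, x = tnorm g} α)
    (hVAL : IsGreatest {x : ℝ | ∃ lam : BTree (Fin m) → Tensor d,
        IsPartialSim I Λ T lam ∧ x = tnorm (lam T)} VAL) :
    |α - VAL| ≤ ε * (3 * (d : ℝ) ^ (2 * r) + 1) ^ H := by
  
  obtain ⟨⟨g0, hg0, hαeq⟩, hαub⟩ := hα
  obtain ⟨⟨lam0, hlam0, hVeq⟩, hVub⟩ := hVAL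
  have hTT := mem_subtrees_self T
  have K := key_induction hd I T hT.1 r hrank Λ ε hε L hsim hb1 hb2 T hTT
  rw [hheight] at K
  set C : ℝ := 3 * (d : ℝ) ^ (2 * r) + 1 with hC
  -- direction 1 : α ≤ VAL + ε C^H
  obtain ⟨lam, hlamsim, herr⟩ := K.1 g0 hg0
  have hlamb : ∀ σ, ‖lam T σ‖ ≤ 1 :=
    fun σ => hb2 T hTT lam hlamsim T hTT σ
  have h1 : tnorm g0 ≤ tnorm (lam T) + ε * C ^ H :=
    tnorm_le_tnorm_add hd g0 (lam T) 1 (ε * C ^ H) hlamb herr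
  have h2 : tnorm (lam T) ≤ VAL := hVub ⟨lam, hlamsim, rfl⟩
  have hdir1 : α ≤ VAL + ε * C ^ H := by
    rw [hαeq]; linarith
  -- direction 2 : VAL ≤ α + ε C^H
  obtain ⟨g1, hg1, herr1⟩ := K.2 lam0 hlam0
  have hg1b : ∀ σ, ‖g1 σ‖ ≤ 1 := fun σ => hb1 T hTT g1 hg1 σ
  have herr1' : ∀ σ, ‖lam0 T σ - g1 σ‖ ≤ ε * C ^ H := by
    intro σ
    rw [← norm_neg, neg_sub]
    exact herr1 σ
  have h3 : tnorm (lam0 T) ≤ tnorm g1 + ε * C ^ H :=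
    tnorm_le_tnorm_add hd (lam0 T) g1 1 (ε * C ^ H) hg1b herr1'
  have h4 : tnorm g1 ≤ α := hαub ⟨g1, hg1, rfl⟩
  have hdir2 : VAL ≤ α + ε * C ^ H := by
    rw [hVeq]; linarith
  rw [abs_sub_le_iff]
  constructor <;> linarith
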